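/- Let n ≥ 2, let X_1,…,X_n be real random variables on a probability space such that the product ∏_{i∈S} X_i is integrable for every nonempty subset S of {1,…,n}, and suppose {1,…,n} is the disjoint union of two nonempty subsets S_1 and S_2 such that the σ-algebra generated by the family (X_i)_{i∈S_1} is independent of the σ-algebra generated by (X_j)_{j∈S_2}. Then the joint cumulant vanishes: Σ over all set partitions {B_1,…,B_k} of {1,…,n} of (k−1)!·(−1)^{k−1}·∏_{j=1}^k E[∏_{i∈B_j} X_i] = 0. -/

import Mathlib

open MeasureTheory Finset Polynomial

section CumulantAux

lemma alt_sum_choose_real (m : ℕ) :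
    ∑ i ∈ Finset.range (m+1), (-1:ℝ)^i * (m.choose i) = if m = 0 then 1 else 0 := by
  have h := Int.alternating_sum_range_choose (n := m)
  apply_fun (fun z : ℤ => (z : ℝ)) at h
  push_cast at h
  rw [h]

lemma inner_sum_eq (n r k : ℕ) (hr : r ≤ n) (hk : 1 ≤ k) :
    ∑ j ∈ range (n+1), (-1:ℝ)^(r+j) * (r.choose j) * (j.descFactorial k)
      = if r = k then (k.factorial : ℝ) else 0 := by
  rcases lt_or_ge r k with hlt | hge
  · rw [if_neg hlt.ne]
    apply Finset.sum_eq_zero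
    intro j hj
    rcases le_or_gt j r with hjr | hrj
    · have : j.descFactorial k = 0 := Nat.descFactorial_eq_zero_iff_lt.mpr (lt_of_le_of_lt hjr hlt)
      simp [this]
    · have : r.choose j = 0 := Nat.choose_eq_zero_of_lt hrj
      simp [this]
  · -- k ≤ r ≤ n
    have hsub : Finset.Icc k r ⊆ Finset.range (n+1) := by
      intro j hj
      simp only [Finset.mem_Icc] at hj
      exact Finset.mem_range.mpr (by omega)
    rw [← Finset.sum_subset hsub]
    · have hIcc : Finset.Icc k r = Finset.Ico k (r+1) := by
        rw [Finset.Ico_add_one_right_eq_Icc]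
      rw [hIcc, Finset.sum_Ico_eq_sum_range]
      have hterm : ∀ i ∈ Finset.range (r + 1 - k),
          (-1:ℝ)^(r+(k+i)) * (r.choose (k+i)) * ((k+i).descFactorial k)
            = ((-1:ℝ)^(r+k) * (r.choose k) * k.factorial) * ((-1:ℝ)^i * ((r-k).choose i)) := by
        intro i hi
        have h1 : (k+i).descFactorial k = k.factorial * (k+i).choose k :=
          Nat.descFactorial_eq_factorial_mul_choose _ _
        have h2 : r.choose (k+i) * (k+i).choose k = r.choose k * (r-k).choose (k+i-k) :=
          Nat.choose_mul (by omega)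
        have h3 : k + i - k = i := by omega
        rw [h3] at h2
        have : (r.choose (k+i) : ℝ) * ((k+i).choose k) = (r.choose k : ℝ) * ((r-k).choose i) := by
          exact_mod_cast congrArg (fun z : ℕ => (z : ℝ)) h2
        have hp : (-1:ℝ)^(r+(k+i)) = (-1)^(r+k) * (-1)^i := by
          rw [← pow_add, add_assoc]
        rw [hp, h1]
        push_cast
        linear_combination ((-1:ℝ)^(r+k) * (-1:ℝ)^i * (k.factorial:ℝ)) * this
      rw [Finset.sum_congr rfl hterm, ← Finset.mul_sum]
      have hrange : r + 1 - k = (r - k) + 1 := by omega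
      rw [hrange, alt_sum_choose_real]
      rcases eq_or_ne r k with he | hne
      · subst he
        simp [← two_mul, pow_mul]
      · have : r - k ≠ 0 := by omega
        rw [if_neg this, if_neg hne]
        ring
    · intro j hjn hjI
      simp only [Finset.mem_Icc, not_and, not_le] at hjI
      rcases le_or_gt j r with hjr | hrj
      · have hjk : j < k := by
          rcases lt_or_ge j k with h | h
          · exact h
          · exact absurd (hjI h) (by omega)
        have : j.descFactorial k = 0 := Nat.descFactorial_eq_zero_iff_lt.mpr hjk
        simp [this]
      · have : r.choose j = 0 := Nat.choose_eq_zero_of_lt hrj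
        simp [this]

noncomputable def dcoef (n j : ℕ) : ℝ :=
  ∑ r ∈ Finset.Icc 1 n, (-1:ℝ)^(r+1) / r * ((-1)^(r+j) * (r.choose j))

lemma dcoef_descFactorial (n k : ℕ) (hk : 1 ≤ k) (hkn : k ≤ n) :
    ∑ j ∈ range (n+1), dcoef n j * (j.descFactorial k : ℝ)
      = (-1)^(k+1) * ((k-1).factorial : ℝ) := by
  simp only [dcoef, Finset.sum_mul]
  rw [Finset.sum_comm]
  have hterm : ∀ r ∈ Finset.Icc 1 n,
      ∑ j ∈ range (n+1), (-1:ℝ)^(r+1) / r * ((-1)^(r+j) * (r.choose j)) * (j.descFactorial k)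
        = (-1:ℝ)^(r+1) / r * (if r = k then (k.factorial : ℝ) else 0) := by
    intro r hr
    rw [← inner_sum_eq n r k (Finset.mem_Icc.mp hr).2 hk, Finset.mul_sum]
    exact Finset.sum_congr rfl fun j _ => by ring
  rw [Finset.sum_congr rfl hterm]
  rw [Finset.sum_eq_single k]
  · rw [if_pos rfl]
    have hkf : (k.factorial : ℝ) = k * ((k-1).factorial : ℝ) := by
      rw_mod_cast [Nat.mul_factorial_pred (by omega)]
    rw [hkf]
    have : (k:ℝ) ≠ 0 := by positivity
    field_simp
  · intro r _ hne
    rw [if_neg hne, mul_zero]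
  · intro hk'
    exact absurd (Finset.mem_Icc.mpr ⟨hk, hkn⟩) hk'

lemma dcoef_sum_eq_zero (n : ℕ) :
    ∑ j ∈ range (n+1), dcoef n j = 0 := by
  simp only [dcoef]
  rw [Finset.sum_comm]
  apply Finset.sum_eq_zero
  intro r hr
  have hr1 : 1 ≤ r := (Finset.mem_Icc.mp hr).1
  have hrn : r ≤ n := (Finset.mem_Icc.mp hr).2
  have hsub : Finset.range (r+1) ⊆ Finset.range (n+1) := by
    intro j hj; simp only [Finset.mem_range] at *; omega
  have : ∑ j ∈ range (n+1), (-1:ℝ)^(r+1) / r * ((-1)^(r+j) * (r.choose j))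
      = (-1:ℝ)^(r+1) / r * ((-1:ℝ)^r * ∑ j ∈ range (r+1), (-1:ℝ)^j * (r.choose j)) := by
    rw [Finset.mul_sum, Finset.mul_sum, ← Finset.sum_subset hsub]
    · refine Finset.sum_congr rfl fun j _ => ?_
      rw [pow_add]
      ring
    · intro j hjn hjr
      have : r.choose j = 0 := Nat.choose_eq_zero_of_lt (by simp only [Finset.mem_range] at *; omega)
      simp [this]
  rw [this, alt_sum_choose_real, if_neg (by omega)]
  ring

lemma descPochhammer_derivative_eval_zero (k : ℕ) (hk : 1 ≤ k) :
    (Polynomial.derivative (descPochhammer ℝ k)).eval 0 = (-1)^(k+1) * ((k-1).factorial : ℝ) := by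
  induction k with
  | zero => omega
  | succ k ih =>
    rcases Nat.eq_zero_or_pos k with rfl | hk1
    · norm_num [descPochhammer_one]
    · rw [descPochhammer_succ_right, derivative_mul]
      simp only [derivative_sub, derivative_X, derivative_natCast, sub_zero, mul_one,
        eval_add, eval_mul, eval_sub, eval_X, eval_natCast]
      rw [ih hk1, descPochhammer_ne_zero_eval_zero (R := ℝ) (n := k) (by omega)]
      have h1 : ((k+1) - 1 : ℕ) = k := by omega
      have h2 : (k - 1 + 1 : ℕ) = k := by omega
      rw [h1]
      have : (k.factorial : ℝ) = k * ((k-1).factorial) := by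
        rw_mod_cast [Nat.mul_factorial_pred hk1.ne']
      rw [this, pow_succ]
      ring

lemma sum_dcoef_eval (n : ℕ) :
    ∀ m, ∀ p : Polynomial ℝ, p.natDegree ≤ m → m ≤ n →
      ∑ j ∈ range (n+1), dcoef n j * p.eval (j:ℝ) = (Polynomial.derivative p).eval 0 := by
  intro m
  induction m with
  | zero =>
    intro p hp _
    rw [Polynomial.eq_C_of_natDegree_le_zero hp]
    simp only [eval_C, derivative_C, eval_zero, ← Finset.sum_mul]
    rw [dcoef_sum_eq_zero, zero_mul]
  | succ m ih =>
    intro p hp hmn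
    rcases le_or_gt p.natDegree m with h | h
    · exact ih p h (by omega)
    · have hdeg : p.natDegree = m+1 := by omega
      have hp0 : p ≠ 0 := fun h0 => by simp [h0] at hdeg
      set D := descPochhammer ℝ (m+1) with hD
      have hDm : D.Monic := monic_descPochhammer ℝ (m+1)
      have hD0 : D ≠ 0 := hDm.ne_zero
      have hDdeg : D.natDegree = m+1 := descPochhammer_natDegree (R := ℝ) (m+1)
      have hlc : p.leadingCoeff ≠ 0 := Polynomial.leadingCoeff_ne_zero.mpr hp0
      set q := p - Polynomial.C p.leadingCoeff * D with hq
      have hdegCD : (Polynomial.C p.leadingCoeff * D).degree = p.degree := by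
        rw [Polynomial.degree_C_mul hlc, Polynomial.degree_eq_natDegree hD0,
          Polynomial.degree_eq_natDegree hp0, hDdeg, hdeg]
      have hlcCD : (Polynomial.C p.leadingCoeff * D).leadingCoeff = p.leadingCoeff := by
        rw [Polynomial.leadingCoeff_mul, Polynomial.leadingCoeff_C, hDm.leadingCoeff, mul_one]
      have hqd : q.natDegree ≤ m := by
        rcases eq_or_ne q 0 with h0 | h0
        · simp [h0]
        · have hlt : q.degree < p.degree := Polynomial.degree_sub_lt hdegCD.symm hp0 hlcCD.symm
          have h2 : q.degree < ((m+1 : ℕ) : WithBot ℕ) := by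
            rw [← hdeg, ← Polynomial.degree_eq_natDegree hp0]; exact hlt
          have := (Polynomial.natDegree_lt_iff_degree_lt (n := m+1) h0).mpr h2
          omega
      have hsplit : p = q + Polynomial.C p.leadingCoeff * D := by rw [hq]; ring
      have hDsum : ∑ j ∈ range (n+1), dcoef n j * D.eval (j:ℝ)
          = (Polynomial.derivative D).eval 0 := by
        have he : ∀ j : ℕ, D.eval (j:ℝ) = (j.descFactorial (m+1) : ℝ) := fun j =>
          descPochhammer_eval_eq_descFactorial (R := ℝ) j (m+1)
        calc ∑ j ∈ range (n+1), dcoef n j * D.eval (j:ℝ)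
            = ∑ j ∈ range (n+1), dcoef n j * (j.descFactorial (m+1) : ℝ) := by
              exact Finset.sum_congr rfl fun j _ => by rw [he j]
          _ = (-1)^(m+1+1) * (((m+1)-1).factorial : ℝ) :=
              dcoef_descFactorial n (m+1) (by omega) (by omega)
          _ = (Polynomial.derivative D).eval 0 :=
              (descPochhammer_derivative_eval_zero (m+1) (by omega)).symm
      calc ∑ j ∈ range (n+1), dcoef n j * p.eval (j:ℝ)
          = (∑ j ∈ range (n+1), dcoef n j * q.eval (j:ℝ))
            + p.leadingCoeff * ∑ j ∈ range (n+1), dcoef n j * D.eval (j:ℝ) := by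
            rw [Finset.mul_sum, ← Finset.sum_add_distrib]
            refine Finset.sum_congr rfl fun j _ => ?_
            conv_lhs => rw [hsplit]
            simp only [eval_add, eval_mul, eval_C]
            ring
        _ = (Polynomial.derivative q).eval 0
            + p.leadingCoeff * (Polynomial.derivative D).eval 0 := by
            rw [ih q hqd (by omega), hDsum]
        _ = (Polynomial.derivative p).eval 0 := by
            conv_rhs => rw [hsplit]
            simp only [derivative_add, derivative_mul, derivative_C, eval_add, eval_mul,
              eval_C, zero_mul, zero_add]
            try ring

variable {α : Type*} [Fintype α] [DecidableEq α]

variable {α : Type*} [Fintype α] [DecidableEq α]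

/-- the fiber of `t` under `c` as a finset -/
def fib {j : ℕ} (c : α → Fin j) (t : Fin j) : Finset α := univ.filter fun i => c i = t

instance kerDecidable {β : Type*} [DecidableEq β] (c : α → β) : DecidableRel ⇑(Setoid.ker c) :=
  fun a b => inferInstanceAs (Decidable (c a = c b))

noncomputable def toP {j : ℕ} (c : α → Fin j) : Finpartition (univ : Finset α) :=
  Finpartition.ofSetoid (Setoid.ker c)

lemma toP_part {j : ℕ} (c : α → Fin j) (a : α) : (toP c).part a = fib c (c a) := by
  ext b
  rw [toP, Finpartition.mem_part_ofSetoid_iff_rel]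
  simp only [fib, mem_filter, mem_univ, true_and]
  exact ⟨fun h => h.symm, fun h => h.symm⟩

lemma parts_eq_image_part (P : Finpartition (univ : Finset α)) :
    P.parts = univ.image P.part := by
  apply Finset.Subset.antisymm
  · intro B hB
    obtain ⟨a, ha, hpa⟩ := P.part_surjOn hB
    exact Finset.mem_image.mpr ⟨a, Finset.mem_univ a, hpa⟩
  · intro B hB
    obtain ⟨a, _, rfl⟩ := Finset.mem_image.mp hB
    exact P.part_mem.mpr (Finset.mem_univ a)

lemma part_eq_fib {j : ℕ} {c : α → Fin j} {P : Finpartition (univ : Finset α)}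
    (hc : toP c = P) {B : Finset α} (hB : B ∈ P.parts) {a : α} (ha : a ∈ B) :
    B = fib c (c a) := by
  rw [← toP_part c a, hc]
  exact (P.part_eq_of_mem hB ha).symm

lemma fib_mem_parts {j : ℕ} {c : α → Fin j} {P : Finpartition (univ : Finset α)}
    (hc : toP c = P) {t : Fin j} (ht : (fib c t).Nonempty) : fib c t ∈ P.parts := by
  obtain ⟨a, ha⟩ := ht
  have hat : c a = t := by simpa [fib] using ha
  rw [← hat, ← toP_part c a, ← hc]
  exact (toP c).part_mem.mpr (Finset.mem_univ a)

lemma prod_fib_eq {j : ℕ} {c : α → Fin j} {P : Finpartition (univ : Finset α)}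
    (hc : toP c = P) (h : Finset α → ℝ) (h0 : h ∅ = 1) :
    ∏ t : Fin j, h (fib c t) = ∏ B ∈ P.parts, h B := by
  classical
  rw [← Finset.prod_filter_mul_prod_filter_not Finset.univ (fun t => (fib c t).Nonempty)]
  have h2 : ∏ t ∈ univ.filter (fun t => ¬ (fib c t).Nonempty), h (fib c t) = 1 := by
    apply Finset.prod_eq_one
    intro t ht
    simp only [Finset.mem_filter, Finset.not_nonempty_iff_eq_empty] at ht
    rw [ht.2, h0]
  rw [h2, mul_one]
  apply Finset.prod_bij (fun t _ => fib c t)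
  · intro t ht
    exact fib_mem_parts hc (by simpa using (Finset.mem_filter.mp ht).2)
  · intro t ht t' ht' hmeq
    obtain ⟨a, ha⟩ := (Finset.mem_filter.mp ht).2
    have hat : c a = t := by simpa [fib] using ha
    have ha' : a ∈ fib c t' := hmeq ▸ ha
    have hat' : c a = t' := by simpa [fib] using ha'
    rw [← hat, hat']
  · intro B hB
    obtain ⟨a, ha⟩ := P.nonempty_of_mem_parts hB
    refine ⟨c a, Finset.mem_filter.mpr ⟨Finset.mem_univ _, ⟨a, ?_⟩⟩, ?_⟩
    · simp [fib]
    · exact (part_eq_fib hc hB ha).symm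
  · intro t _
    rfl

lemma finpartition_eq_of_parts_eq {P Q : Finpartition (univ : Finset α)}
    (h : P.parts = Q.parts) : P = Q := by
  cases P; cases Q; simp_all

/-- maps with fiber partition `P` are equivalent to injections from parts into `Fin j` -/
noncomputable def matchEquiv {j : ℕ} (P : Finpartition (univ : Finset α)) :
    {c : α → Fin j // toP c = P} ≃ (↥P.parts ↪ Fin j) where
  toFun := fun ⟨c, hc⟩ =>
    ⟨fun B => c (P.nonempty_of_mem_parts B.2).choose, by
      intro B B' he
      have he' : c (P.nonempty_of_mem_parts B.2).choose
          = c (P.nonempty_of_mem_parts B'.2).choose := he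
      apply Subtype.ext
      rw [part_eq_fib hc B.2 (P.nonempty_of_mem_parts B.2).choose_spec,
        part_eq_fib hc B'.2 (P.nonempty_of_mem_parts B'.2).choose_spec, he']⟩
  invFun := fun e =>
    ⟨fun a => e ⟨P.part a, P.part_mem.mpr (Finset.mem_univ a)⟩, by
      apply finpartition_eq_of_parts_eq
      rw [parts_eq_image_part (toP _)]
      conv_rhs => rw [parts_eq_image_part P]
      apply Finset.image_congr
      intro a _
      rw [toP_part]
      ext b
      simp only [fib, Finset.mem_filter, Finset.mem_univ, true_and]
      constructor
      · intro hb
        have h2 : P.part b = P.part a := congrArg Subtype.val (e.injective hb)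
        exact h2 ▸ P.mem_part (Finset.mem_univ b)
      · intro hb
        have h2 : P.part b = P.part a := P.part_eq_of_mem (P.part_mem.mpr (Finset.mem_univ a)) hb
        exact congrArg e (Subtype.ext h2)⟩
  left_inv := fun ⟨c, hc⟩ => by
    apply Subtype.ext
    funext a
    have hP : P.part a = fib c (c a) := by rw [← hc, toP_part]
    show c (P.nonempty_of_mem_parts (P.part_mem.mpr (Finset.mem_univ a))).choose = c a
    set y := (P.nonempty_of_mem_parts (P.part_mem.mpr (Finset.mem_univ a))).choose with hy
    have hmem : y ∈ P.part a :=
      (P.nonempty_of_mem_parts (P.part_mem.mpr (Finset.mem_univ a))).choose_spec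
    rw [hP] at hmem
    simpa [fib] using hmem
  right_inv := fun e => by
    apply DFunLike.ext
    intro B
    have h2 : P.part ((P.nonempty_of_mem_parts B.2).choose) = B.1 :=
      P.part_eq_of_mem B.2 (P.nonempty_of_mem_parts B.2).choose_spec
    exact congrArg e (Subtype.ext h2)

lemma card_fiber_eq {j : ℕ} (P : Finpartition (univ : Finset α)) :
    ((Finset.univ : Finset (α → Fin j)).filter (fun c => toP c = P)).card
      = j.descFactorial P.parts.card := by
  classical
  have h1 : Fintype.card {c : α → Fin j // toP c = P}
      = ((Finset.univ : Finset (α → Fin j)).filter (fun c => toP c = P)).card := by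
    apply Fintype.card_of_subtype
    intro c
    simp
  rw [← h1, Fintype.card_congr (matchEquiv P), Fintype.card_embedding_eq, Fintype.card_fin,
    Fintype.card_coe]

lemma sum_maps_eq (h : Finset α → ℝ) (h0 : h ∅ = 1) (j : ℕ) :
    ∑ c : α → Fin j, ∏ t : Fin j, h (fib c t)
      = ∑ P : Finpartition (univ : Finset α),
          (j.descFactorial P.parts.card : ℝ) * ∏ B ∈ P.parts, h B := by
  classical
  rw [← Finset.sum_fiberwise_of_maps_to (g := toP)
    (fun (c : α → Fin j) (_ : c ∈ Finset.univ) => Finset.mem_univ (toP c))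
    (fun c => ∏ t : Fin j, h (fib c t))]
  apply Finset.sum_congr rfl
  intro P _
  have hconst : ∀ c ∈ Finset.univ.filter (fun c : α → Fin j => toP c = P),
      ∏ t : Fin j, h (fib c t) = ∏ B ∈ P.parts, h B := by
    intro c hc
    exact prod_fib_eq (Finset.mem_filter.mp hc).2 h h0
  rw [Finset.sum_congr rfl hconst, Finset.sum_const, card_fiber_eq P, nsmul_eq_mul]

lemma prob_factor
    {Ω : Type*} [MeasurableSpace Ω] (μ : Measure Ω) [IsProbabilityMeasure μ]
    {n : ℕ} (X : Fin n → Ω → ℝ)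
    (hint : ∀ S : Finset (Fin n), S.Nonempty → Integrable (fun ω => ∏ i ∈ S, X i ω) μ)
    (S₁ S₂ : Finset (Fin n)) (hdisj : Disjoint S₁ S₂) (hunion : S₁ ∪ S₂ = Finset.univ)
    (hindep : ProbabilityTheory.Indep
      (⨆ i ∈ S₁, MeasurableSpace.comap (X i) inferInstance)
      (⨆ j ∈ S₂, MeasurableSpace.comap (X j) inferInstance) μ)
    (B : Finset (Fin n)) :
    ∫ ω, ∏ i ∈ B, X i ω ∂μ
      = (∫ ω, ∏ i ∈ B ∩ S₁, X i ω ∂μ) * (∫ ω, ∏ i ∈ B ∩ S₂, X i ω ∂μ) := by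
  classical
  have hBu : (B ∩ S₁) ∪ (B ∩ S₂) = B := by
    rw [← Finset.inter_union_distrib_left, hunion, Finset.inter_univ]
  have hd : Disjoint (B ∩ S₁) (B ∩ S₂) :=
    hdisj.mono Finset.inter_subset_right Finset.inter_subset_right
  have hBsplit : (fun ω => ∏ i ∈ B, X i ω)
      = fun ω => (∏ i ∈ B ∩ S₁, X i ω) * (∏ i ∈ B ∩ S₂, X i ω) := by
    funext ω
    conv_lhs => rw [← hBu, Finset.prod_union hd]
  rcases Finset.eq_empty_or_nonempty (B ∩ S₁) with h1 | h1
  · rw [hBsplit, h1]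
    simp only [Finset.prod_empty, one_mul]
    rw [integral_const]
    simp
  rcases Finset.eq_empty_or_nonempty (B ∩ S₂) with h2 | h2
  · rw [hBsplit, h2]
    simp only [Finset.prod_empty, mul_one]
    rw [integral_const]
    simp
  -- both nonempty
  set m₁ := ⨆ i ∈ S₁, MeasurableSpace.comap (X i) inferInstance with hm₁
  set m₂ := ⨆ j ∈ S₂, MeasurableSpace.comap (X j) inferInstance with hm₂
  set Y := fun ω => ∏ i ∈ B ∩ S₁, X i ω with hY
  set Z := fun ω => ∏ i ∈ B ∩ S₂, X i ω with hZ
  have hYm : @Measurable Ω ℝ m₁ _ Y := by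
    apply Finset.measurable_prod
    intro i hi
    have hle : MeasurableSpace.comap (X i) inferInstance ≤ m₁ := by
      rw [hm₁]
      exact le_iSup₂ (f := fun i (_ : i ∈ S₁) => MeasurableSpace.comap (X i) inferInstance)
        i (Finset.mem_inter.mp hi).2
    exact Measurable.mono (measurable_iff_comap_le.mpr le_rfl) hle le_rfl
  have hZm : @Measurable Ω ℝ m₂ _ Z := by
    apply Finset.measurable_prod
    intro i hi
    have hle : MeasurableSpace.comap (X i) inferInstance ≤ m₂ := by
      rw [hm₂]
      exact le_iSup₂ (f := fun i (_ : i ∈ S₂) => MeasurableSpace.comap (X i) inferInstance)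
        i (Finset.mem_inter.mp hi).2
    exact Measurable.mono (measurable_iff_comap_le.mpr le_rfl) hle le_rfl
  have hIndepF : ProbabilityTheory.IndepFun Y Z μ := by
    exact ProbabilityTheory.indep_of_indep_of_le_left
      (ProbabilityTheory.indep_of_indep_of_le_right hindep (measurable_iff_comap_le.mp hZm))
      (measurable_iff_comap_le.mp hYm)
  have hmul := ProbabilityTheory.IndepFun.integral_fun_mul_eq_mul_integral hIndepF (hint _ h1).aestronglyMeasurable (hint _ h2).aestronglyMeasurable
  rw [hBsplit]
  exact hmul

end CumulantAux

/-- Let `n ≥ 2` and let `X₁, …, Xₙ` be real random variables whose partial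
products over nonempty index sets are integrable.  If `{1,…,n}` splits as a disjoint union of
nonempty sets `S₁`, `S₂` such that the σ-algebra generated by `(X_i)_{i ∈ S₁}` is independent
of the σ-algebra generated by `(X_j)_{j ∈ S₂}`, then the joint cumulant vanishes:
`Σ_{partitions {B₁,…,B_k} of {1,…,n}} (k−1)! (−1)^{k−1} ∏_j E[∏_{i ∈ B_j} X_i] = 0`. -/
theorem joint_cumulant_eq_zero_of_indep
    {Ω : Type*} [MeasurableSpace Ω] (μ : Measure Ω) [IsProbabilityMeasure μ]
    {n : ℕ} (hn : 2 ≤ n) (X : Fin n → Ω → ℝ)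
    (hint : ∀ S : Finset (Fin n), S.Nonempty → Integrable (fun ω => ∏ i ∈ S, X i ω) μ)
    (S₁ S₂ : Finset (Fin n)) (h₁ : S₁.Nonempty) (h₂ : S₂.Nonempty)
    (hdisj : Disjoint S₁ S₂) (hunion : S₁ ∪ S₂ = Finset.univ)
    (hindep : ProbabilityTheory.Indep
      (⨆ i ∈ S₁, MeasurableSpace.comap (X i) inferInstance)
      (⨆ j ∈ S₂, MeasurableSpace.comap (X j) inferInstance) μ) :
    ∑ P : Finpartition (Finset.univ : Finset (Fin n)),
      (Nat.factorial (P.parts.card - 1) : ℝ) * (-1) ^ (P.parts.card - 1) *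
        ∏ B ∈ P.parts, ∫ ω, ∏ i ∈ B, X i ω ∂μ = 0 := by
  classical
  haveI : Nonempty (Fin n) := ⟨⟨0, by omega⟩⟩
  haveI hne1 : Nonempty {i : Fin n // i ∈ S₁} := ⟨⟨h₁.choose, h₁.choose_spec⟩⟩
  haveI hne2 : Nonempty {i : Fin n // i ∈ S₂} := ⟨⟨h₂.choose, h₂.choose_spec⟩⟩
  set f := fun B : Finset (Fin n) => ∫ ω, ∏ i ∈ B ∩ S₁, X i ω ∂μ with hf
  set g := fun B : Finset (Fin n) => ∫ ω, ∏ i ∈ B ∩ S₂, X i ω ∂μ with hg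
  set f₁ := fun T : Finset {i : Fin n // i ∈ S₁} => ∫ ω, ∏ i ∈ T, X i.1 ω ∂μ with hf₁
  set g₁ := fun T : Finset {i : Fin n // i ∈ S₂} => ∫ ω, ∏ i ∈ T, X i.1 ω ∂μ with hg₁
  have hint1 : (1:ℝ) = ∫ (_ : Ω), (1:ℝ) ∂μ := by rw [integral_const]; simp
  have hf0 : f ∅ = 1 := by
    rw [hf]; simp only [Finset.empty_inter, Finset.prod_empty]; rw [← hint1]
  have hg0 : g ∅ = 1 := by
    rw [hg]; simp only [Finset.empty_inter, Finset.prod_empty]; rw [← hint1]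
  have hf₁0 : f₁ ∅ = 1 := by
    rw [hf₁]; simp only [Finset.prod_empty]; rw [← hint1]
  have hg₁0 : g₁ ∅ = 1 := by
    rw [hg₁]; simp only [Finset.prod_empty]; rw [← hint1]
  have hfg : ∀ B : Finset (Fin n), ∫ ω, ∏ i ∈ B, X i ω ∂μ = f B * g B :=
    prob_factor μ X hint S₁ S₂ hdisj hunion hindep
  have hcomp : ∀ i : Fin n, i ∉ S₁ → i ∈ S₂ := by
    intro i hi
    have h := Finset.mem_univ i
    rw [← hunion, Finset.mem_union] at h
    tauto
  have hnotin : ∀ i : Fin n, i ∈ S₂ → i ∉ S₁ := fun i hi2 hi1 =>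
    Finset.disjoint_left.mp hdisj hi1 hi2
  -- polynomials
  set Fp : Polynomial ℝ := ∑ Q : Finpartition (Finset.univ : Finset {i : Fin n // i ∈ S₁}),
    Polynomial.C (∏ B ∈ Q.parts, f₁ B) * descPochhammer ℝ Q.parts.card with hFp
  set Gp : Polynomial ℝ := ∑ Q : Finpartition (Finset.univ : Finset {i : Fin n // i ∈ S₂}),
    Polynomial.C (∏ B ∈ Q.parts, g₁ B) * descPochhammer ℝ Q.parts.card with hGp
  have hFeval : ∀ j : ℕ, Fp.eval (j:ℝ)
      = ∑ c₁ : {i : Fin n // i ∈ S₁} → Fin j, ∏ t : Fin j, f₁ (fib c₁ t) := by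
    intro j
    rw [sum_maps_eq f₁ hf₁0 j, hFp, Polynomial.eval_finset_sum]
    refine Finset.sum_congr rfl fun Q _ => ?_
    rw [Polynomial.eval_mul, Polynomial.eval_C,
      descPochhammer_eval_eq_descFactorial (R := ℝ) j Q.parts.card]
    ring
  have hGeval : ∀ j : ℕ, Gp.eval (j:ℝ)
      = ∑ c₂ : {i : Fin n // i ∈ S₂} → Fin j, ∏ t : Fin j, g₁ (fib c₂ t) := by
    intro j
    rw [sum_maps_eq g₁ hg₁0 j, hGp, Polynomial.eval_finset_sum]
    refine Finset.sum_congr rfl fun Q _ => ?_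
    rw [Polynomial.eval_mul, Polynomial.eval_C,
      descPochhammer_eval_eq_descFactorial (R := ℝ) j Q.parts.card]
    ring
  have hFzero : Fp.eval 0 = 0 := by
    rw [hFp, Polynomial.eval_finset_sum]
    apply Finset.sum_eq_zero
    intro Q _
    have hcard : Q.parts.card ≠ 0 := by
      have := Finset.card_pos.mpr (Q.parts_nonempty (by rw [Finset.bot_eq_empty]; exact Finset.univ_nonempty.ne_empty))
      omega
    rw [Polynomial.eval_mul, descPochhammer_ne_zero_eval_zero (R := ℝ) hcard, mul_zero]
  have hGzero : Gp.eval 0 = 0 := by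
    rw [hGp, Polynomial.eval_finset_sum]
    apply Finset.sum_eq_zero
    intro Q _
    have hcard : Q.parts.card ≠ 0 := by
      have := Finset.card_pos.mpr (Q.parts_nonempty (by rw [Finset.bot_eq_empty]; exact Finset.univ_nonempty.ne_empty))
      omega
    rw [Polynomial.eval_mul, descPochhammer_ne_zero_eval_zero (R := ℝ) hcard, mul_zero]
  have hcardsum : S₁.card + S₂.card = n := by
    have h := Finset.card_union_of_disjoint hdisj
    rw [hunion, Finset.card_univ, Fintype.card_fin] at h
    omega
  have hFdeg : Fp.natDegree ≤ S₁.card := by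
    rw [hFp]
    apply Polynomial.natDegree_sum_le_of_forall_le
    intro Q _
    refine (Polynomial.natDegree_C_mul_le _ _).trans ?_
    rw [descPochhammer_natDegree (R := ℝ)]
    refine Q.card_parts_le_card.trans ?_
    rw [Finset.card_univ, Fintype.card_coe]
  have hGdeg : Gp.natDegree ≤ S₂.card := by
    rw [hGp]
    apply Polynomial.natDegree_sum_le_of_forall_le
    intro Q _
    refine (Polynomial.natDegree_C_mul_le _ _).trans ?_
    rw [descPochhammer_natDegree (R := ℝ)]
    refine Q.card_parts_le_card.trans ?_
    rw [Finset.card_univ, Fintype.card_coe]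
  -- factorization of the j-th moment sum
  have hMj : ∀ j : ℕ,
      ∑ c : Fin n → Fin j, ∏ t : Fin j, (f (fib c t) * g (fib c t))
        = (∑ c₁ : {i : Fin n // i ∈ S₁} → Fin j, ∏ t : Fin j, f₁ (fib c₁ t))
          * (∑ c₂ : {i : Fin n // i ∈ S₂} → Fin j, ∏ t : Fin j, g₁ (fib c₂ t)) := by
    intro j
    have hffib : ∀ (c : Fin n → Fin j) (t : Fin j),
        f (fib c t) = f₁ (fib (fun i : {i : Fin n // i ∈ S₁} => c i.1) t) := by
      intro c t
      have hset : (fib c t) ∩ S₁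
          = (fib (fun i : {i : Fin n // i ∈ S₁} => c i.1) t).map
            (Function.Embedding.subtype (· ∈ S₁)) := by
        ext i
        simp only [Finset.mem_inter, fib, Finset.mem_filter, Finset.mem_univ, true_and,
          Finset.mem_map, Function.Embedding.coe_subtype]
        constructor
        · rintro ⟨hct, hi⟩; exact ⟨⟨i, hi⟩, hct, rfl⟩
        · rintro ⟨⟨i', hi'⟩, hh1, rfl⟩; exact ⟨hh1, hi'⟩
      rw [hf, hf₁]
      simp only
      rw [hset]
      congr 1
      funext ω
      rw [Finset.prod_map]
      simp only [Function.Embedding.coe_subtype]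
    have hgfib : ∀ (c : Fin n → Fin j) (t : Fin j),
        g (fib c t) = g₁ (fib (fun i : {i : Fin n // i ∈ S₂} => c i.1) t) := by
      intro c t
      have hset : (fib c t) ∩ S₂
          = (fib (fun i : {i : Fin n // i ∈ S₂} => c i.1) t).map
            (Function.Embedding.subtype (· ∈ S₂)) := by
        ext i
        simp only [Finset.mem_inter, fib, Finset.mem_filter, Finset.mem_univ, true_and,
          Finset.mem_map, Function.Embedding.coe_subtype]
        constructor
        · rintro ⟨hct, hi⟩; exact ⟨⟨i, hi⟩, hct, rfl⟩
        · rintro ⟨⟨i', hi'⟩, hh1, rfl⟩; exact ⟨hh1, hi'⟩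
      rw [hg, hg₁]
      simp only
      rw [hset]
      congr 1
      funext ω
      rw [Finset.prod_map]
      simp only [Function.Embedding.coe_subtype]
    let E : (Fin n → Fin j) ≃ (({i : Fin n // i ∈ S₁} → Fin j) × ({i : Fin n // i ∈ S₂} → Fin j)) :=
      { toFun := fun c => (fun i => c i.1, fun i => c i.1)
        invFun := fun p i => if h : i ∈ S₁ then p.1 ⟨i, h⟩ else p.2 ⟨i, hcomp i h⟩
        left_inv := by
          intro c
          funext i
          by_cases h : i ∈ S₁
          · simp [h]
          · simp [h]
        right_inv := by
          intro p
          refine Prod.ext ?_ ?_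
          · funext i
            simp [i.2]
          · funext i
            have : (i : Fin n) ∉ S₁ := hnotin i.1 i.2
            simp [this] }
    calc ∑ c : Fin n → Fin j, ∏ t : Fin j, (f (fib c t) * g (fib c t))
        = ∑ c : Fin n → Fin j,
            (∏ t : Fin j, f₁ (fib (fun i : {i : Fin n // i ∈ S₁} => c i.1) t))
            * (∏ t : Fin j, g₁ (fib (fun i : {i : Fin n // i ∈ S₂} => c i.1) t)) := by
          refine Finset.sum_congr rfl fun c _ => ?_
          rw [← Finset.prod_mul_distrib]
          exact Finset.prod_congr rfl fun t _ => by rw [hffib c t, hgfib c t]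
      _ = ∑ p : ({i : Fin n // i ∈ S₁} → Fin j) × ({i : Fin n // i ∈ S₂} → Fin j),
            (∏ t : Fin j, f₁ (fib p.1 t)) * (∏ t : Fin j, g₁ (fib p.2 t)) := by
          exact Fintype.sum_bijective E E.bijective _ _ (fun c => rfl)
      _ = _ := by
          rw [Fintype.sum_prod_type, Finset.sum_mul_sum]
  -- coefficient identity
  have hcoef : ∀ P : Finpartition (Finset.univ : Finset (Fin n)),
      ((P.parts.card - 1).factorial : ℝ) * (-1)^(P.parts.card - 1)
        = ∑ j ∈ Finset.range (n+1), dcoef n j * (j.descFactorial P.parts.card : ℝ) := by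
    intro P
    have hk1 : 1 ≤ P.parts.card :=
      Finset.card_pos.mpr (P.parts_nonempty (by rw [Finset.bot_eq_empty]; exact Finset.univ_nonempty.ne_empty))
    have hk2 : P.parts.card ≤ n := by
      have h := P.card_parts_le_card
      rwa [Finset.card_univ, Fintype.card_fin] at h
    rw [dcoef_descFactorial n _ hk1 hk2]
    have h2 : P.parts.card + 1 = (P.parts.card - 1) + 2 := by omega
    rw [h2, pow_add, neg_one_sq, mul_one]
    ring
  -- main computation
  calc ∑ P : Finpartition (Finset.univ : Finset (Fin n)),
        (Nat.factorial (P.parts.card - 1) : ℝ) * (-1) ^ (P.parts.card - 1) *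
          ∏ B ∈ P.parts, ∫ ω, ∏ i ∈ B, X i ω ∂μ
      = ∑ P : Finpartition (Finset.univ : Finset (Fin n)), ∑ j ∈ Finset.range (n+1),
          dcoef n j * ((j.descFactorial P.parts.card : ℝ) * ∏ B ∈ P.parts, (f B * g B)) := by
        refine Finset.sum_congr rfl fun P _ => ?_
        rw [hcoef P, Finset.sum_mul]
        refine Finset.sum_congr rfl fun j _ => ?_
        rw [Finset.prod_congr rfl fun B _ => hfg B]
        ring
    _ = ∑ j ∈ Finset.range (n+1), dcoef n j *
          ∑ P : Finpartition (Finset.univ : Finset (Fin n)),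
            (j.descFactorial P.parts.card : ℝ) * ∏ B ∈ P.parts, (f B * g B) := by
        rw [Finset.sum_comm]
        exact Finset.sum_congr rfl fun j _ => by rw [Finset.mul_sum]
    _ = ∑ j ∈ Finset.range (n+1), dcoef n j * ((Fp * Gp).eval (j:ℝ)) := by
        refine Finset.sum_congr rfl fun j _ => ?_
        congr 1
        rw [← sum_maps_eq (fun B => f B * g B) (by show f ∅ * g ∅ = 1; rw [hf0, hg0, mul_one]) j,
          Polynomial.eval_mul, hFeval j, hGeval j, ← hMj j]
    _ = (Polynomial.derivative (Fp * Gp)).eval 0 := by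
        refine sum_dcoef_eval n n (Fp * Gp) ?_ le_rfl
        refine Polynomial.natDegree_mul_le.trans ?_
        omega
    _ = 0 := by
        rw [Polynomial.derivative_mul]
        simp [hFzero, hGzero]
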